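/- The Jones matching of a rooted planar ternary tree avoids the pattern (a1,a4), (a2,a7), (a3,a6), (a5,a8): there are no integers a1 < a2 < a3 < a4 < a5 < a6 < a7 < a8 such that the four pairs {a1,a4}, {a5,a8}, {a2,a7}, {a3,a6} all belong to M(T). -/
import Mathlib


inductive TernaryTree : Type
  | leaf : TernaryTree
  | node : TernaryTree → TernaryTree → TernaryTree → TernaryTree

namespace TernaryTree

/-- number of leaves -/
def numLeaves : TernaryTree → ℕ
  | leaf => 1
  | node a b c => a.numLeaves + b.numLeaves + c.numLeaves

/-- number of internal (3-ary branching) vertices -/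
def numInternal : TernaryTree → ℕ
  | leaf => 0
  | node a b c => a.numInternal + b.numInternal + c.numInternal + 1

/-- the distinguished leaf `f` of a tree whose leaves are labelled `o+1, …, o + numLeaves` -/
def distLeaf : ℕ → TernaryTree → ℕ
  | o, leaf => o + 1
  | o, node a b _ => distLeaf (o + a.numLeaves) b

/-- the matching `M'` of a tree whose leaves are labelled `o+1, …, o + numLeaves` -/
def matchAux : ℕ → TernaryTree → Finset (Finset ℕ)
  | _, leaf => ∅
  | o, node a b c =>
      matchAux o a ∪ matchAux (o + a.numLeaves) b ∪
        matchAux (o + a.numLeaves + b.numLeaves) c ∪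
        {({distLeaf o a, distLeaf (o + a.numLeaves + b.numLeaves) c} : Finset ℕ)}

/-- the Jones matching `M(T) = M'(T) ∪ {{0, f(T)}}` -/
def jonesMatching (T : TernaryTree) : Finset (Finset ℕ) :=
  matchAux 0 T ∪ {({0, distLeaf 0 T} : Finset ℕ)}

end TernaryTree



open TernaryTree

/-- the matching with a root arc at `o` -/
def NN (o : ℕ) (T : TernaryTree) : Finset (Finset ℕ) :=
  matchAux o T ∪ {({o, distLeaf o T} : Finset ℕ)}

lemma root_mem (o : ℕ) (T : TernaryTree) : ({o, distLeaf o T} : Finset ℕ) ∈ NN o T :=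
  Finset.mem_union_right _ (Finset.mem_singleton_self _)

lemma aux_mem {e : Finset ℕ} {o : ℕ} {T : TernaryTree} (h : e ∈ matchAux o T) : e ∈ NN o T :=
  Finset.mem_union_left _ h

lemma distLeaf_bounds : ∀ (T : TernaryTree) (o : ℕ), o < distLeaf o T ∧ distLeaf o T ≤ o + T.numLeaves := by
  intro T
  induction T with
  | leaf => intro o; simp [distLeaf, numLeaves]
  | node a b c iha ihb ihc =>
      intro o
      have := ihb (o + a.numLeaves)
      simp only [distLeaf, numLeaves]
      omega

lemma matchAux_bounds : ∀ (T : TernaryTree) (o : ℕ) (e : Finset ℕ), e ∈ matchAux o T →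
    ∀ x ∈ e, o < x ∧ x ≤ o + T.numLeaves := by
  intro T
  induction T with
  | leaf => intro o e he; simp [matchAux] at he
  | node a b c iha ihb ihc =>
      intro o e he x hx
      simp only [matchAux, Finset.mem_union, Finset.mem_singleton] at he
      rcases he with ((h | h) | h) | h
      · have := iha o e h x hx; simp only [numLeaves]; omega
      · have := ihb _ e h x hx; simp only [numLeaves]; omega
      · have := ihc _ e h x hx; simp only [numLeaves]; omega
      · subst h
        simp only [Finset.mem_insert, Finset.mem_singleton] at hx
        have h1 := distLeaf_bounds a o
        have h2 := distLeaf_bounds c (o + a.numLeaves + b.numLeaves)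
        simp only [numLeaves]
        rcases hx with h | h <;> omega

lemma pair_eq {x y p q : ℕ} (hxy : x < y) (hpq : p < q) (h : ({x, y} : Finset ℕ) = {p, q}) :
    x = p ∧ y = q := by
  have hx : x = p ∨ x = q := by
    have hm : x ∈ ({p, q} : Finset ℕ) := by rw [← h]; exact Finset.mem_insert_self x {y}
    simpa using hm
  have hy : y = p ∨ y = q := by
    have hm : y ∈ ({p, q} : Finset ℕ) := by
      rw [← h]; exact Finset.mem_insert_of_mem (Finset.mem_singleton_self y)
    simpa using hm
  have hp : p = x ∨ p = y := by
    have hm : p ∈ ({x, y} : Finset ℕ) := by rw [h]; exact Finset.mem_insert_self p {q}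
    simpa using hm
  rcases hx with h1 | h1 <;> rcases hy with h2 | h2 <;> rcases hp with h3 | h3 <;> omega

lemma classify {a b c : TernaryTree} {o x y : ℕ} (hxy : x < y)
    (h : ({x, y} : Finset ℕ) ∈ NN o (node a b c)) :
    (x = o ∧ y = distLeaf (o + a.numLeaves) b ∧ o + a.numLeaves < y ∧
        y ≤ o + a.numLeaves + b.numLeaves)
  ∨ (({x, y} : Finset ℕ) ∈ matchAux o a ∧ o < x ∧ y ≤ o + a.numLeaves)
  ∨ (({x, y} : Finset ℕ) ∈ matchAux (o + a.numLeaves) b ∧ o + a.numLeaves < x ∧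
        y ≤ o + a.numLeaves + b.numLeaves)
  ∨ (({x, y} : Finset ℕ) ∈ matchAux (o + a.numLeaves + b.numLeaves) c ∧
        o + a.numLeaves + b.numLeaves < x ∧ y ≤ o + a.numLeaves + b.numLeaves + c.numLeaves)
  ∨ (x = distLeaf o a ∧ y = distLeaf (o + a.numLeaves + b.numLeaves) c ∧ o < x ∧
        x ≤ o + a.numLeaves ∧ o + a.numLeaves + b.numLeaves < y ∧
        y ≤ o + a.numLeaves + b.numLeaves + c.numLeaves) := by
  have hda := distLeaf_bounds a o
  have hdb := distLeaf_bounds b (o + a.numLeaves)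
  have hdc := distLeaf_bounds c (o + a.numLeaves + b.numLeaves)
  simp only [NN, matchAux, distLeaf, Finset.mem_union, Finset.mem_singleton] at h
  rcases h with (((h | h) | h) | h) | h
  · have hbx := matchAux_bounds a o _ h x (by simp)
    have hby := matchAux_bounds a o _ h y (by simp)
    exact Or.inr (Or.inl ⟨h, hbx.1, hby.2⟩)
  · have hbx := matchAux_bounds b _ _ h x (by simp)
    have hby := matchAux_bounds b _ _ h y (by simp)
    exact Or.inr (Or.inr (Or.inl ⟨h, hbx.1, hby.2⟩))
  · have hbx := matchAux_bounds c _ _ h x (by simp)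
    have hby := matchAux_bounds c _ _ h y (by simp)
    exact Or.inr (Or.inr (Or.inr (Or.inl ⟨h, hbx.1, hby.2⟩)))
  · obtain ⟨h1, h2⟩ := pair_eq hxy (by omega) h
    exact Or.inr (Or.inr (Or.inr (Or.inr ⟨h1, h2, by omega, by omega, by omega, by omega⟩)))
  · obtain ⟨h1, h2⟩ := pair_eq hxy (by omega) h
    exact Or.inl ⟨h1, h2, by omega, by omega⟩

lemma leaf_mem {o x y : ℕ} (h : ({x, y} : Finset ℕ) ∈ NN o leaf) :
    (x = o ∨ x = o + 1) ∧ (y = o ∨ y = o + 1) := by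
  simp only [NN, matchAux, distLeaf, Finset.empty_union, Finset.mem_singleton] at h
  constructor
  · have hm : x ∈ ({o, o + 1} : Finset ℕ) := by rw [← h]; exact Finset.mem_insert_self x {y}
    simpa using hm
  · have hm : y ∈ ({o, o + 1} : Finset ℕ) := by
      rw [← h]; exact Finset.mem_insert_of_mem (Finset.mem_singleton_self y)
    simpa using hm

def Pat0 (M : Finset (Finset ℕ)) : Prop :=
  ∃ b1 b2 b3 b4 b5 b6 : ℕ, b1 < b2 ∧ b2 < b3 ∧ b3 < b4 ∧ b4 < b5 ∧ b5 < b6 ∧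
    ({b1, b4} : Finset ℕ) ∈ M ∧ ({b2, b5} : Finset ℕ) ∈ M ∧ ({b3, b6} : Finset ℕ) ∈ M

def Pat1 (M : Finset (Finset ℕ)) : Prop :=
  ∃ a1 a2 a3 a4 a5 a6 a7 a8 : ℕ,
    a1 < a2 ∧ a2 < a3 ∧ a3 < a4 ∧ a4 < a5 ∧ a5 < a6 ∧ a6 < a7 ∧ a7 < a8 ∧
    ({a1, a4} : Finset ℕ) ∈ M ∧ ({a2, a7} : Finset ℕ) ∈ M ∧
    ({a3, a6} : Finset ℕ) ∈ M ∧ ({a5, a8} : Finset ℕ) ∈ M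

def Pat2 (M : Finset (Finset ℕ)) : Prop :=
  ∃ b1 b2 b3 b4 b5 b6 b7 b8 : ℕ,
    b1 < b2 ∧ b2 < b3 ∧ b3 < b4 ∧ b4 < b5 ∧ b5 < b6 ∧ b6 < b7 ∧ b7 < b8 ∧
    ({b1, b6} : Finset ℕ) ∈ M ∧ ({b2, b5} : Finset ℕ) ∈ M ∧
    ({b3, b8} : Finset ℕ) ∈ M ∧ ({b4, b7} : Finset ℕ) ∈ M

lemma step0 {a b c : TernaryTree}
    (iha : ∀ o, ¬ Pat0 (NN o a) ∧ ¬ Pat1 (NN o a) ∧ ¬ Pat2 (NN o a))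
    (ihb : ∀ o, ¬ Pat0 (NN o b) ∧ ¬ Pat1 (NN o b) ∧ ¬ Pat2 (NN o b))
    (ihc : ∀ o, ¬ Pat0 (NN o c) ∧ ¬ Pat1 (NN o c) ∧ ¬ Pat2 (NN o c))
    (o : ℕ) : ¬ Pat0 (NN o (node a b c)) := by
  rintro ⟨b1, b2, b3, b4, b5, b6, o1, o2, o3, o4, o5, m1, m2, m3⟩
  have h1 := classify (show b1 < b4 by omega) m1
  have h2 := classify (show b2 < b5 by omega) m2
  have h3 := classify (show b3 < b6 by omega) m3
  rcases h1 with ⟨r11, r12, r13, r14⟩ | ⟨q1, g11, g12⟩ | ⟨q1, g11, g12⟩ | ⟨q1, g11, g12⟩ |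
      ⟨e11, e12, e13, e14, e15, e16⟩ <;>
    rcases h2 with ⟨r21, r22, r23, r24⟩ | ⟨q2, g21, g22⟩ | ⟨q2, g21, g22⟩ | ⟨q2, g21, g22⟩ |
      ⟨e21, e22, e23, e24, e25, e26⟩ <;>
    rcases h3 with ⟨r31, r32, r33, r34⟩ | ⟨q3, g31, g32⟩ | ⟨q3, g31, g32⟩ | ⟨q3, g31, g32⟩ |
      ⟨e31, e32, e33, e34, e35, e36⟩ <;>
    try omega
  · -- (R,B,B)
    exact (ihb (o + a.numLeaves)).1 ⟨o + a.numLeaves, b2, b3, b4, b5, b6,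
      by omega, by omega, by omega, by omega, by omega,
      by rw [r12]; exact root_mem _ _, aux_mem q2, aux_mem q3⟩
  · -- (A,A,A)
    exact (iha o).1 ⟨b1, b2, b3, b4, b5, b6, o1, o2, o3, o4, o5,
      aux_mem q1, aux_mem q2, aux_mem q3⟩
  · -- (A,A,E)
    exact (iha o).1 ⟨o, b1, b2, b3, b4, b5, by omega, o1, o2, o3, o4,
      by rw [e31]; exact root_mem _ _, aux_mem q1, aux_mem q2⟩
  · -- (B,B,B)
    exact (ihb (o + a.numLeaves)).1 ⟨b1, b2, b3, b4, b5, b6, o1, o2, o3, o4, o5,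
      aux_mem q1, aux_mem q2, aux_mem q3⟩
  · -- (C,C,C)
    exact (ihc (o + a.numLeaves + b.numLeaves)).1 ⟨b1, b2, b3, b4, b5, b6, o1, o2, o3, o4, o5,
      aux_mem q1, aux_mem q2, aux_mem q3⟩
  · -- (E,C,C)
    exact (ihc (o + a.numLeaves + b.numLeaves)).1 ⟨o + a.numLeaves + b.numLeaves, b2, b3, b4, b5, b6,
      by omega, o2, o3, o4, o5,
      by rw [e12]; exact root_mem _ _, aux_mem q2, aux_mem q3⟩

lemma step1 {a b c : TernaryTree}
    (iha : ∀ o, ¬ Pat0 (NN o a) ∧ ¬ Pat1 (NN o a) ∧ ¬ Pat2 (NN o a))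
    (ihb : ∀ o, ¬ Pat0 (NN o b) ∧ ¬ Pat1 (NN o b) ∧ ¬ Pat2 (NN o b))
    (ihc : ∀ o, ¬ Pat0 (NN o c) ∧ ¬ Pat1 (NN o c) ∧ ¬ Pat2 (NN o c))
    (o : ℕ) : ¬ Pat1 (NN o (node a b c)) := by
  rintro ⟨a1, a2, a3, a4, a5, a6, a7, a8, o1, o2, o3, o4, o5, o6, o7, m1, m2, m3, m4⟩
  have h1 := classify (show a1 < a4 by omega) m1
  have h2 := classify (show a2 < a7 by omega) m2
  have h3 := classify (show a3 < a6 by omega) m3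
  have h4 := classify (show a5 < a8 by omega) m4
  rcases h1 with ⟨r11, r12, r13, r14⟩ | ⟨q1, g11, g12⟩ | ⟨q1, g11, g12⟩ | ⟨q1, g11, g12⟩ |
      ⟨e11, e12, e13, e14, e15, e16⟩ <;>
    rcases h2 with ⟨r21, r22, r23, r24⟩ | ⟨q2, g21, g22⟩ | ⟨q2, g21, g22⟩ | ⟨q2, g21, g22⟩ |
      ⟨e21, e22, e23, e24, e25, e26⟩ <;>
    rcases h3 with ⟨r31, r32, r33, r34⟩ | ⟨q3, g31, g32⟩ | ⟨q3, g31, g32⟩ | ⟨q3, g31, g32⟩ |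
      ⟨e31, e32, e33, e34, e35, e36⟩ <;>
    rcases h4 with ⟨r41, r42, r43, r44⟩ | ⟨q4, g41, g42⟩ | ⟨q4, g41, g42⟩ | ⟨q4, g41, g42⟩ |
      ⟨e41, e42, e43, e44, e45, e46⟩ <;>
    try omega
  · -- (R,B,B,B)
    exact (ihb (o + a.numLeaves)).2.1 ⟨o + a.numLeaves, a2, a3, a4, a5, a6, a7, a8,
      by omega, by omega, by omega, by omega, by omega, by omega, by omega,
      by rw [r12]; exact root_mem _ _, aux_mem q2, aux_mem q3, aux_mem q4⟩
  · -- (A,A,A,A)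
    exact (iha o).2.1 ⟨a1, a2, a3, a4, a5, a6, a7, a8, o1, o2, o3, o4, o5, o6, o7,
      aux_mem q1, aux_mem q2, aux_mem q3, aux_mem q4⟩
  · -- (A,A,A,E) : reduces to Pat2 in NN o a
    exact (iha o).2.2 ⟨o, a1, a2, a3, a4, a5, a6, a7,
      by omega, o1, o2, o3, o4, o5, o6,
      by rw [e41]; exact root_mem _ _, aux_mem q1, aux_mem q2, aux_mem q3⟩
  · -- (B,B,B,B)
    exact (ihb (o + a.numLeaves)).2.1 ⟨a1, a2, a3, a4, a5, a6, a7, a8, o1, o2, o3, o4, o5, o6, o7,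
      aux_mem q1, aux_mem q2, aux_mem q3, aux_mem q4⟩
  · -- (C,C,C,C)
    exact (ihc (o + a.numLeaves + b.numLeaves)).2.1 ⟨a1, a2, a3, a4, a5, a6, a7, a8,
      o1, o2, o3, o4, o5, o6, o7, aux_mem q1, aux_mem q2, aux_mem q3, aux_mem q4⟩
  · -- (E,C,C,C)
    exact (ihc (o + a.numLeaves + b.numLeaves)).2.1 ⟨o + a.numLeaves + b.numLeaves,
      a2, a3, a4, a5, a6, a7, a8, by omega, o2, o3, o4, o5, o6, o7,
      by rw [e12]; exact root_mem _ _, aux_mem q2, aux_mem q3, aux_mem q4⟩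

lemma step2 {a b c : TernaryTree}
    (iha : ∀ o, ¬ Pat0 (NN o a) ∧ ¬ Pat1 (NN o a) ∧ ¬ Pat2 (NN o a))
    (ihb : ∀ o, ¬ Pat0 (NN o b) ∧ ¬ Pat1 (NN o b) ∧ ¬ Pat2 (NN o b))
    (ihc : ∀ o, ¬ Pat0 (NN o c) ∧ ¬ Pat1 (NN o c) ∧ ¬ Pat2 (NN o c))
    (o : ℕ) : ¬ Pat2 (NN o (node a b c)) := by
  rintro ⟨b1, b2, b3, b4, b5, b6, b7, b8, o1, o2, o3, o4, o5, o6, o7, m1, m2, m3, m4⟩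
  have h1 := classify (show b1 < b6 by omega) m1
  have h2 := classify (show b2 < b5 by omega) m2
  have h3 := classify (show b3 < b8 by omega) m3
  have h4 := classify (show b4 < b7 by omega) m4
  rcases h1 with ⟨r11, r12, r13, r14⟩ | ⟨q1, g11, g12⟩ | ⟨q1, g11, g12⟩ | ⟨q1, g11, g12⟩ |
      ⟨e11, e12, e13, e14, e15, e16⟩ <;>
    rcases h2 with ⟨r21, r22, r23, r24⟩ | ⟨q2, g21, g22⟩ | ⟨q2, g21, g22⟩ | ⟨q2, g21, g22⟩ |
      ⟨e21, e22, e23, e24, e25, e26⟩ <;>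
    rcases h3 with ⟨r31, r32, r33, r34⟩ | ⟨q3, g31, g32⟩ | ⟨q3, g31, g32⟩ | ⟨q3, g31, g32⟩ |
      ⟨e31, e32, e33, e34, e35, e36⟩ <;>
    rcases h4 with ⟨r41, r42, r43, r44⟩ | ⟨q4, g41, g42⟩ | ⟨q4, g41, g42⟩ | ⟨q4, g41, g42⟩ |
      ⟨e41, e42, e43, e44, e45, e46⟩ <;>
    try omega
  · -- (R,B,B,B)
    exact (ihb (o + a.numLeaves)).2.2 ⟨o + a.numLeaves, b2, b3, b4, b5, b6, b7, b8,
      by omega, by omega, by omega, by omega, by omega, by omega, by omega,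
      by rw [r12]; exact root_mem _ _, aux_mem q2, aux_mem q3, aux_mem q4⟩
  · -- (A,A,A,A)
    exact (iha o).2.2 ⟨b1, b2, b3, b4, b5, b6, b7, b8, o1, o2, o3, o4, o5, o6, o7,
      aux_mem q1, aux_mem q2, aux_mem q3, aux_mem q4⟩
  · -- (A,A,E,A) : reduces to Pat1 in NN o a
    exact (iha o).2.1 ⟨o, b1, b2, b3, b4, b5, b6, b7,
      by omega, o1, o2, o3, o4, o5, o6,
      by rw [e31]; exact root_mem _ _, aux_mem q1, aux_mem q2, aux_mem q4⟩
  · -- (B,B,B,B)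
    exact (ihb (o + a.numLeaves)).2.2 ⟨b1, b2, b3, b4, b5, b6, b7, b8, o1, o2, o3, o4, o5, o6, o7,
      aux_mem q1, aux_mem q2, aux_mem q3, aux_mem q4⟩
  · -- (C,C,C,C)
    exact (ihc (o + a.numLeaves + b.numLeaves)).2.2 ⟨b1, b2, b3, b4, b5, b6, b7, b8,
      o1, o2, o3, o4, o5, o6, o7, aux_mem q1, aux_mem q2, aux_mem q3, aux_mem q4⟩
  · -- (E,C,C,C)
    exact (ihc (o + a.numLeaves + b.numLeaves)).2.2 ⟨o + a.numLeaves + b.numLeaves,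
      b2, b3, b4, b5, b6, b7, b8, by omega, o2, o3, o4, o5, o6, o7,
      by rw [e12]; exact root_mem _ _, aux_mem q2, aux_mem q3, aux_mem q4⟩

lemma main_avoid : ∀ (T : TernaryTree) (o : ℕ),
    ¬ Pat0 (NN o T) ∧ ¬ Pat1 (NN o T) ∧ ¬ Pat2 (NN o T) := by
  intro T
  induction T with
  | leaf =>
      intro o
      refine ⟨?_, ?_, ?_⟩
      · rintro ⟨b1, b2, b3, b4, b5, b6, o1, o2, o3, o4, o5, m1, m2, m3⟩
        obtain ⟨k1, k2⟩ := leaf_mem m1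
        obtain ⟨k3, k4⟩ := leaf_mem m2
        rcases k1 with h | h <;> rcases k2 with h' | h' <;> rcases k3 with h'' | h'' <;>
          rcases k4 with h''' | h''' <;> omega
      · rintro ⟨a1, a2, a3, a4, a5, a6, a7, a8, o1, o2, o3, o4, o5, o6, o7, m1, m2, m3, m4⟩
        obtain ⟨k1, k2⟩ := leaf_mem m1
        obtain ⟨k3, k4⟩ := leaf_mem m2
        rcases k1 with h | h <;> rcases k2 with h' | h' <;> rcases k3 with h'' | h'' <;>
          rcases k4 with h''' | h''' <;> omega
      · rintro ⟨b1, b2, b3, b4, b5, b6, b7, b8, o1, o2, o3, o4, o5, o6, o7, m1, m2, m3, m4⟩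
        obtain ⟨k1, k2⟩ := leaf_mem m1
        obtain ⟨k3, k4⟩ := leaf_mem m2
        rcases k1 with h | h <;> rcases k2 with h' | h' <;> rcases k3 with h'' | h'' <;>
          rcases k4 with h''' | h''' <;> omega
  | node a b c iha ihb ihc =>
      intro o
      exact ⟨step0 iha ihb ihc o, step1 iha ihb ihc o, step2 iha ihb ihc o⟩

theorem jonesMatching_avoids_pattern (T : TernaryTree) :
    ¬ ∃ a₁ a₂ a₃ a₄ a₅ a₆ a₇ a₈ : ℕ,
      a₁ < a₂ ∧ a₂ < a₃ ∧ a₃ < a₄ ∧ a₄ < a₅ ∧ a₅ < a₆ ∧ a₆ < a₇ ∧ a₇ < a₈ ∧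
      ({a₁, a₄} : Finset ℕ) ∈ T.jonesMatching ∧
      ({a₅, a₈} : Finset ℕ) ∈ T.jonesMatching ∧
      ({a₂, a₇} : Finset ℕ) ∈ T.jonesMatching ∧
      ({a₃, a₆} : Finset ℕ) ∈ T.jonesMatching := by
  rintro ⟨a1, a2, a3, a4, a5, a6, a7, a8, h12, h23, h34, h45, h56, h67, h78, m14, m58, m27, m36⟩
  have hN : T.jonesMatching = NN 0 T := rfl
  rw [hN] at m14 m58 m27 m36
  exact (main_avoid T 0).2.1
    ⟨a1, a2, a3, a4, a5, a6, a7, a8, h12, h23, h34, h45, h56, h67, h78, m14, m27, m36, m58⟩
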